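/- For every two distinct vertices u and v in a graph G, the minimum number of edges in an edge-cut separating u and v equals the maximum number of pairwise edge-disjoint u-v-paths in G. -/

import Mathlib

open SimpleGraph

/-- `F` is an edge-cut of `G` separating `u` and `v`. -/
def CutsBetween {V : Type*} (G : SimpleGraph V) (u v : V) (F : Finset (Sym2 V)) : Prop :=
  ↑F ⊆ G.edgeSet ∧ ¬ (G.deleteEdges ↑F).Reachable u v

/-- `lam G u v` is the minimum number of edges in an edge-cut of `G` separating `u` and `v`. -/
noncomputable def lam {V : Type*} (G : SimpleGraph V) (u v : V) : ℕ :=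
  sInf {n | ∃ F : Finset (Sym2 V), CutsBetween G u v F ∧ F.card = n}

/-- `c` is a strong rainbow disconnection coloring of `G`: every pair of distinct vertices
admits a rainbow minimum edge-cut separating them. -/
def IsSRDColoring {V : Type*} (G : SimpleGraph V) (c : Sym2 V → ℕ) : Prop :=
  ∀ u v : V, u ≠ v → ∃ F : Finset (Sym2 V),
    CutsBetween G u v F ∧ F.card = lam G u v ∧ Set.InjOn c ↑F

/-- The strong rainbow disconnection number of `G`. -/
noncomputable def srd {V : Type*} (G : SimpleGraph V) : ℕ :=
  sInf {k | ∃ c : Sym2 V → ℕ, (∀ e ∈ G.edgeSet, c e < k) ∧ IsSRDColoring G c}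

namespace MengerAux

variable {α : Type*}

theorem getLastD_append (s : List α) (a : α) (t : List α) (d : α) :
    (s ++ a :: t).getLastD d = t.getLastD a := by
  induction s generalizing d with
  | nil => rw [List.nil_append, List.getLastD_cons]
  | cons x s ih => rw [List.cons_append, List.getLastD_cons]; exact ih x

/-- Extract a duplicate-free chain from reflexive transitive closure. -/
theorem exists_nodup_chain {r : α → α → Prop} {a b : α} (h : Relation.ReflTransGen r a b) :
    ∃ l : List α, List.Chain r a l ∧ l.getLastD a = b ∧ (a :: l).Nodup := by
  induction h using Relation.ReflTransGen.head_induction_on with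
  | refl => exact ⟨[], List.Chain.nil, rfl, List.nodup_singleton _⟩
  | head hab _ ih =>
    rename_i a c _
    obtain ⟨l, hc, hlast, hnd⟩ := ih
    by_cases hmem : a ∈ c :: l
    · obtain ⟨s, t, hst⟩ := List.append_of_mem hmem
      have hsuf : a :: t <:+ c :: l := ⟨s, hst.symm⟩
      have hchain' : List.Chain' r (a :: t) :=
        List.IsChain.suffix (show List.Chain' r (c :: l) from hc) hsuf
      refine ⟨t, (show List.Chain r a t from hchain'), ?_, hnd.sublist hsuf.sublist⟩
      have h2 := getLastD_append s a t c
      rw [← hst, List.getLastD_cons, hlast] at h2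
      exact h2.symm
    · exact ⟨c :: l, List.Chain.cons hab hc, by rw [List.getLastD_cons]; exact hlast,
        List.nodup_cons.mpr ⟨hmem, hnd⟩⟩

/-- Consecutive ordered pairs of the list `a :: l`. -/
def arcs : α → List α → List (α × α)
  | _, [] => []
  | a, b :: t => (a, b) :: arcs b t

theorem mem_of_mem_arcs {p q a : α} {l : List α} (h : (p, q) ∈ arcs a l) :
    p ∈ a :: l ∧ q ∈ l := by
  induction l generalizing a with
  | nil => simp [arcs] at h
  | cons b t ih =>
    rcases List.mem_cons.mp h with h | h
    · simp only [Prod.mk.injEq] at h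
      obtain ⟨rfl, rfl⟩ := h
      exact ⟨List.mem_cons_self, List.mem_cons_self⟩
    · obtain ⟨h1, h2⟩ := ih h
      exact ⟨List.mem_cons_of_mem _ h1, List.mem_cons_of_mem _ h2⟩

theorem rel_of_mem_arcs {r : α → α → Prop} {p q a : α} {l : List α}
    (hc : List.Chain r a l) (h : (p, q) ∈ arcs a l) : r p q := by
  induction l generalizing a with
  | nil => simp [arcs] at h
  | cons b t ih =>
    rcases List.mem_cons.mp h with h | h
    · simp only [Prod.mk.injEq] at h
      obtain ⟨rfl, rfl⟩ := h
      exact (List.chain_cons.mp hc).1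
    · exact ih (List.chain_cons.mp hc).2 h

theorem not_rev_mem_arcs {p q a : α} {l : List α} (hnd : (a :: l).Nodup)
    (h : (p, q) ∈ arcs a l) : (q, p) ∉ arcs a l := by
  induction l generalizing a with
  | nil => simp [arcs] at h
  | cons b t ih =>
    have hna : a ∉ b :: t := (List.nodup_cons.mp hnd).1
    have hnd' := (List.nodup_cons.mp hnd).2
    rcases List.mem_cons.mp h with h | h
    · simp only [Prod.mk.injEq] at h
      obtain ⟨rfl, rfl⟩ := h
      intro hcon
      rcases List.mem_cons.mp hcon with h' | h'
      · simp only [Prod.mk.injEq] at h'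
        exact hna (h'.1 ▸ List.mem_cons_self)
      · exact hna (List.mem_cons_of_mem _ (mem_of_mem_arcs h').2)
    · intro hcon
      rcases List.mem_cons.mp hcon with h' | h'
      · simp only [Prod.mk.injEq] at h'
        exact hna (List.mem_cons_of_mem _ (h'.1 ▸ (mem_of_mem_arcs h).2))
      · exact ih hnd' h h'

theorem not_mem_arcs_snd_head {p a : α} {l : List α} (hnd : (a :: l).Nodup) :
    (p, a) ∉ arcs a l := fun h => (List.nodup_cons.mp hnd).1 (mem_of_mem_arcs h).2

theorem not_mem_arcs_fst_last {q a : α} {l : List α} (hnd : (a :: l).Nodup) :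
    (l.getLastD a, q) ∉ arcs a l := by
  induction l generalizing a with
  | nil => simp [arcs]
  | cons b t ih =>
    rw [List.getLastD_cons]
    intro h
    rcases List.mem_cons.mp h with h' | h'
    · simp only [Prod.mk.injEq] at h'
      exact (List.nodup_cons.mp hnd).1 (h'.1 ▸ (List.getLastD_mem_cons (l := t) (a := b)))
    · exact ih (List.nodup_cons.mp hnd).2 h'


section Flow
variable {V : Type*} [Fintype V] [DecidableEq V]

/-- Net outflow of `g` at `w`. -/
def phi (g : V → V → ℤ) (w : V) : ℤ := (∑ x, g w x) - ∑ x, g x w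

theorem sum_ite_pair_left (p q : V) (c : ℤ) (w : V) :
    (∑ x, if (w, x) = (p, q) then c else 0) = if w = p then c else 0 := by
  have : ∀ x : V, (if (w, x) = (p, q) then c else 0)
      = if x = q then (if w = p then c else 0) else 0 := by
    intro x
    by_cases h1 : x = q <;> by_cases h2 : w = p <;> simp [Prod.ext_iff, h1, h2]
  rw [Finset.sum_congr rfl fun x _ => this x,
    Finset.sum_ite_eq' Finset.univ q (fun _ => if w = p then c else 0)]
  simp

theorem sum_ite_pair_right (p q : V) (c : ℤ) (w : V) :
    (∑ x, if (x, w) = (p, q) then c else 0) = if w = q then c else 0 := by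
  have : ∀ x : V, (if (x, w) = (p, q) then c else 0)
      = if x = p then (if w = q then c else 0) else 0 := by
    intro x
    by_cases h1 : x = p <;> by_cases h2 : w = q <;> simp [Prod.ext_iff, h1, h2]
  rw [Finset.sum_congr rfl fun x _ => this x,
    Finset.sum_ite_eq' Finset.univ p (fun _ => if w = q then c else 0)]
  simp

theorem phi_single (p q : V) (c : ℤ) (w : V) :
    phi (fun x y => if (x, y) = (p, q) then c else 0) w
      = (if w = p then c else 0) - (if w = q then c else 0) := by
  unfold phi
  rw [sum_ite_pair_left, sum_ite_pair_right]

/-- Augmentation along a chain: push one unit from `a` along `a :: l`. -/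
def augF (f : V → V → ℤ) : V → List V → V → V → ℤ
  | _, [], _, _ => 0
  | a, b :: t, x, y =>
      augF f b t x y + (if (x, y) = (a, b) then 1 - f b a else 0)
        - (if (x, y) = (b, a) then f b a else 0)

/-- Decrement along a chain: remove one unit along `a :: l`. -/
def decF : V → List V → V → V → ℤ
  | _, [], _, _ => 0
  | a, b :: t, x, y => decF b t x y - (if (x, y) = (a, b) then 1 else 0)

theorem phi_augF (f : V → V → ℤ) : ∀ (a : V) (l : List V) (w : V),
    phi (augF f a l) w = (if w = a then 1 else 0) - (if w = l.getLastD a then 1 else 0)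
  | a, [], w => by simp [augF, phi]
  | a, b :: t, w => by
    have ih := phi_augF f b t w
    have h1 := phi_single a b (1 - f b a) w
    have h2 := phi_single b a (f b a) w
    have key : phi (augF f a (b :: t)) w
        = phi (augF f b t) w
          + phi (fun x y => if (x, y) = (a, b) then 1 - f b a else 0) w
          - phi (fun x y => if (x, y) = (b, a) then f b a else 0) w := by
      unfold phi
      show (∑ x, (augF f b t w x + _ - _)) - (∑ x, (augF f b t x w + _ - _)) = _
      rw [Finset.sum_sub_distrib, Finset.sum_add_distrib,
        Finset.sum_sub_distrib, Finset.sum_add_distrib]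
      ring
    rw [key, ih, h1, h2, List.getLastD_cons]
    split_ifs <;> omega

theorem phi_decF : ∀ (a : V) (l : List V) (w : V),
    phi (decF a l) w = (if w = l.getLastD a then 1 else 0) - (if w = a then 1 else 0)
  | a, [], w => by simp [decF, phi]
  | a, b :: t, w => by
    have ih := phi_decF b t w
    have h1 := phi_single a b (1 : ℤ) w
    have key : phi (decF a (b :: t)) w
        = phi (decF b t) w - phi (fun x y => if (x, y) = (a, b) then (1 : ℤ) else 0) w := by
      unfold phi
      show (∑ x, (decF b t w x - _)) - (∑ x, (decF b t x w - _)) = _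
      rw [Finset.sum_sub_distrib, Finset.sum_sub_distrib]
      ring
    rw [key, ih, h1, List.getLastD_cons]
    split_ifs <;> omega

end Flow

section Eval
variable {V : Type*} [DecidableEq V]

theorem augF_eval (f : V → V → ℤ) {a : V} {l : List V} (hnd : (a :: l).Nodup) (x y : V) :
    augF f a l x y = if (x, y) ∈ arcs a l then 1 - f y x
      else if (y, x) ∈ arcs a l then -(f x y) else 0 := by
  induction l generalizing a with
  | nil => simp [augF, arcs]
  | cons b t ih =>
    have hna : a ∉ b :: t := (List.nodup_cons.mp hnd).1
    have hnd' : (b :: t).Nodup := (List.nodup_cons.mp hnd).2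
    have hab : a ≠ b := fun h => hna (h ▸ List.mem_cons_self)
    have ihx := ih hnd'
    have hsw : ((y, x) = (a, b)) ↔ ((x, y) = (b, a)) := by
      simp only [Prod.mk.injEq]; exact and_comm
    show augF f b t x y + (if (x, y) = (a, b) then 1 - f b a else 0)
        - (if (x, y) = (b, a) then f b a else 0) = _
    by_cases h1 : (x, y) = (a, b)
    · have hx : x = a := congrArg Prod.fst h1
      have hy : y = b := congrArg Prod.snd h1
      have F1 : (x, y) ∉ arcs b t := by
        intro h; apply hna; have := (mem_of_mem_arcs h).1; rwa [hx] at this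
      have F2 : (y, x) ∉ arcs b t := by
        intro h; apply hna
        have := (mem_of_mem_arcs h).2; rw [hx] at this
        exact List.mem_cons_of_mem _ this
      have hC2 : (x, y) ≠ (b, a) := by
        intro h
        rw [h1] at h
        exact hab (congrArg Prod.fst h)
      have hm : (x, y) ∈ arcs a (b :: t) := by
        show _ ∈ (a, b) :: arcs b t
        exact h1 ▸ List.mem_cons_self
      rw [ihx, if_neg F1, if_neg F2, if_pos h1, if_neg hC2, if_pos hm, hx, hy]
      ring
    · by_cases h2 : (x, y) = (b, a)
      · have hx : x = b := congrArg Prod.fst h2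
        have hy : y = a := congrArg Prod.snd h2
        have F1 : (x, y) ∉ arcs b t := by
          intro h; apply hna
          have := (mem_of_mem_arcs h).2; rw [hy] at this
          exact List.mem_cons_of_mem _ this
        have F2 : (y, x) ∉ arcs b t := by
          intro h; apply hna; have := (mem_of_mem_arcs h).1; rwa [hy] at this
        have hm1 : (x, y) ∉ arcs a (b :: t) := by
          show _ ∉ (a, b) :: arcs b t
          rw [List.mem_cons]; rintro (h | h)
          · exact h1 h
          · exact F1 h
        have hm2 : (y, x) ∈ arcs a (b :: t) := by
          show _ ∈ (a, b) :: arcs b t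
          exact (hsw.mpr h2) ▸ List.mem_cons_self
        rw [ihx, if_neg F1, if_neg F2, if_neg h1, if_pos h2, if_neg hm1, if_pos hm2, hx, hy]
        ring
      · have e1 : ((x, y) ∈ arcs a (b :: t)) ↔ ((x, y) ∈ arcs b t) := by
          show _ ∈ (a, b) :: arcs b t ↔ _
          rw [List.mem_cons]
          exact ⟨fun h => h.resolve_left h1, Or.inr⟩
        have e2 : ((y, x) ∈ arcs a (b :: t)) ↔ ((y, x) ∈ arcs b t) := by
          show _ ∈ (a, b) :: arcs b t ↔ _
          rw [List.mem_cons]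
          exact ⟨fun h => h.resolve_left (fun hh => h2 (hsw.mp hh)), Or.inr⟩
        rw [ihx, if_neg h1, if_neg h2]
        simp only [e1, e2]
        ring

theorem decF_eval {a : V} {l : List V} (hnd : (a :: l).Nodup) (x y : V) :
    decF a l x y = if (x, y) ∈ arcs a l then -1 else 0 := by
  induction l generalizing a with
  | nil => simp [decF, arcs]
  | cons b t ih =>
    have hna : a ∉ b :: t := (List.nodup_cons.mp hnd).1
    have hnd' : (b :: t).Nodup := (List.nodup_cons.mp hnd).2
    show decF b t x y - (if (x, y) = (a, b) then 1 else 0) = _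
    rw [ih hnd']
    by_cases h1 : (x, y) = (a, b)
    · have hx : x = a := congrArg Prod.fst h1
      have F1 : (x, y) ∉ arcs b t := by
        intro h; apply hna; have := (mem_of_mem_arcs h).1; rwa [hx] at this
      have hm : (x, y) ∈ arcs a (b :: t) := by
        show _ ∈ (a, b) :: arcs b t
        exact h1 ▸ List.mem_cons_self
      rw [if_neg F1, if_pos h1, if_pos hm]
      ring
    · have e1 : ((x, y) ∈ arcs a (b :: t)) ↔ ((x, y) ∈ arcs b t) := by
        show _ ∈ (a, b) :: arcs b t ↔ _
        rw [List.mem_cons]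
        exact ⟨fun h => h.resolve_left h1, Or.inr⟩
      rw [if_neg h1]
      simp only [e1]
      ring

end Eval

section Graph
open SimpleGraph
variable {V : Type*} [Fintype V] [DecidableEq V] (G : SimpleGraph V) (u v : V)

/-- Integer-valued unit-capacity flow from `u` to `v` on `G`. -/
def IsFlow (f : V → V → ℤ) : Prop :=
  (∀ a b, 0 ≤ f a b) ∧ (∀ a b, f a b ≠ 0 → G.Adj a b) ∧ (∀ a b, f a b + f b a ≤ 1) ∧
  (∀ x, f x u = 0) ∧ (∀ x, f v x = 0) ∧ (∀ w, w ≠ u → w ≠ v → phi f w = 0)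

/-- The value of a flow. -/
def fval (f : V → V → ℤ) : ℤ := ∑ x, f u x

variable {G u v}

theorem fval_eq_phi {f : V → V → ℤ} (hf : IsFlow G u v f) : fval u f = phi f u := by
  unfold fval phi
  rw [Finset.sum_eq_zero fun x _ => hf.2.2.2.1 x]
  ring

theorem cross_sum {f : V → V → ℤ} (hf : IsFlow G u v f) (S : Finset V)
    (hu : u ∈ S) (hv : v ∉ S) :
    ∑ w ∈ S, ∑ x ∈ Sᶜ, f w x = (∑ w ∈ S, ∑ x ∈ Sᶜ, f x w) + fval u f := by
  have h1 : ∑ w ∈ S, phi f w = fval u f := by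
    rw [Finset.sum_eq_single_of_mem u hu, ← fval_eq_phi hf]
    intro w hw hwu
    exact hf.2.2.2.2.2 w hwu (fun h => hv (h ▸ hw))
  have h2 : ∑ w ∈ S, phi f w
      = ((∑ w ∈ S, ∑ x ∈ S, f w x) + ∑ w ∈ S, ∑ x ∈ Sᶜ, f w x)
        - ((∑ w ∈ S, ∑ x ∈ S, f x w) + ∑ w ∈ S, ∑ x ∈ Sᶜ, f x w) := by
    unfold phi
    rw [Finset.sum_sub_distrib]
    congr 1 <;> rw [← Finset.sum_add_distrib] <;>
      exact Finset.sum_congr rfl fun w _ => (Finset.sum_add_sum_compl S _).symm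
  have h3 : ∑ w ∈ S, ∑ x ∈ S, f w x = ∑ w ∈ S, ∑ x ∈ S, f x w := Finset.sum_comm
  rw [h2, h3] at h1
  linarith

variable (G) in
/-- Build a walk from an adjacency chain. -/
def walkOfChain : ∀ (a : V) (l : List V), List.Chain G.Adj a l → G.Walk a (l.getLastD a)
  | _, [], _ => SimpleGraph.Walk.nil
  | _, [_], h =>
      SimpleGraph.Walk.cons (List.chain_cons.mp h).1
        (walkOfChain _ [] (List.chain_cons.mp h).2)
  | _, _ :: c :: t, h =>
      SimpleGraph.Walk.cons (List.chain_cons.mp h).1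
        (walkOfChain _ (c :: t) (List.chain_cons.mp h).2)

theorem walkOfChain_support : ∀ (a : V) (l : List V) (h : List.Chain G.Adj a l),
    (walkOfChain G a l h).support = a :: l
  | _, [], _ => rfl
  | a, [b], h => by
    show a :: (walkOfChain G b [] _).support = _
    exact congrArg (List.cons a) (walkOfChain_support b [] _)
  | a, b :: c :: t, h => by
    show a :: (walkOfChain G b (c :: t) _).support = _
    exact congrArg (List.cons a) (walkOfChain_support b (c :: t) _)

theorem walkOfChain_edges : ∀ (a : V) (l : List V) (h : List.Chain G.Adj a l),
    (walkOfChain G a l h).edges = (arcs a l).map fun p => s(p.1, p.2)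
  | _, [], _ => rfl
  | a, [b], h => by
    show s(a, b) :: (walkOfChain G b [] _).edges = _
    refine (congrArg (List.cons s(a, b)) (walkOfChain_edges b [] _)).trans ?_
    rfl
  | a, b :: c :: t, h => by
    show s(a, b) :: (walkOfChain G b (c :: t) _).edges = _
    refine (congrArg (List.cons s(a, b)) (walkOfChain_edges b (c :: t) _)).trans ?_
    rfl

theorem walkOfChain_isPath {a : V} {l : List V} (h : List.Chain G.Adj a l)
    (hnd : (a :: l).Nodup) : (walkOfChain G a l h).IsPath := by
  rw [SimpleGraph.Walk.isPath_def, walkOfChain_support]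
  exact hnd


theorem phi_add (g h : V → V → ℤ) (w : V) :
    phi (fun x y => g x y + h x y) w = phi g w + phi h w := by
  unfold phi
  rw [Finset.sum_add_distrib, Finset.sum_add_distrib]
  ring

theorem fval_nonneg {f : V → V → ℤ} (hf : IsFlow G u v f) : 0 ≤ fval u f :=
  Finset.sum_nonneg fun x _ => hf.1 u x

/-- Augmenting a flow along a residual path. -/
theorem augment (huv : u ≠ v) {f : V → V → ℤ} (hf : IsFlow G u v f)
    (h : Relation.ReflTransGen (fun a b => G.Adj a b ∧ f a b = 0) u v) :
    ∃ f', IsFlow G u v f' ∧ fval u f' = fval u f + 1 := by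
  obtain ⟨hpos, hadj, hcap, hinu, houtv, hcons⟩ := hf
  obtain ⟨l, hc, hlast, hnd⟩ := exists_nodup_chain h
  set A := arcs u l with hA
  have harc : ∀ p q : V, (p, q) ∈ A → G.Adj p q ∧ f p q = 0 :=
    fun p q hpq => rel_of_mem_arcs (r := fun a b => G.Adj a b ∧ f a b = 0) hc hpq
  have hrev : ∀ p q : V, (p, q) ∈ A → (q, p) ∉ A := fun p q hpq => not_rev_mem_arcs hnd hpq
  have heval := augF_eval f hnd
  refine ⟨fun x y => f x y + augF f u l x y, ⟨?_, ?_, ?_, ?_, ?_, ?_⟩, ?_⟩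
  · -- nonneg
    intro a b
    dsimp only
    rw [heval a b]
    by_cases h1 : (a, b) ∈ A
    · rw [if_pos h1, (harc a b h1).2]
      have := hcap a b
      have := hpos b a
      have h0 := (harc a b h1).2
      omega
    · rw [if_neg h1]
      by_cases h2 : (b, a) ∈ A
      · rw [if_pos h2]; omega
      · rw [if_neg h2]; have := hpos a b; omega
  · -- adjacency
    intro a b hne
    dsimp only at hne
    rw [heval a b] at hne
    by_cases h1 : (a, b) ∈ A
    · exact (harc a b h1).1
    · rw [if_neg h1] at hne
      by_cases h2 : (b, a) ∈ A
      · rw [if_pos h2] at hne; omega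
      · rw [if_neg h2] at hne
        exact hadj a b (by omega)
  · -- capacity
    intro a b
    dsimp only
    rw [heval a b, heval b a]
    by_cases h1 : (a, b) ∈ A
    · rw [if_pos h1, if_neg (hrev a b h1), if_pos h1, (harc a b h1).2]
      have := hpos b a
      omega
    · rw [if_neg h1]
      by_cases h2 : (b, a) ∈ A
      · rw [if_pos h2, if_pos h2, (harc b a h2).2]
        have := hpos a b
        omega
      · rw [if_neg h2, if_neg h2, if_neg h1]
        have := hcap a b
        omega
  · -- nothing into u
    intro x
    dsimp only
    rw [heval x u, if_neg (show (x, u) ∉ A from not_mem_arcs_snd_head hnd)]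
    by_cases h2 : (u, x) ∈ A
    · rw [if_pos h2]; have := hinu x; omega
    · rw [if_neg h2]; have := hinu x; omega
  · -- nothing out of v
    intro x
    have hvlast : (v, x) ∉ A := by
      rw [← hlast]
      exact not_mem_arcs_fst_last hnd
    dsimp only
    rw [heval v x, if_neg hvlast]
    by_cases h2 : (x, v) ∈ A
    · rw [if_pos h2]; have := houtv x; omega
    · rw [if_neg h2]; have := houtv x; omega
  · -- conservation
    intro w hwu hwv
    rw [phi_add, hcons w hwu hwv, phi_augF, hlast, if_neg hwu, if_neg hwv]
    ring
  · -- value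
    unfold fval
    dsimp only
    rw [Finset.sum_add_distrib]
    have : (∑ x, augF f u l u x) = 1 := by
      have hphi := phi_augF f u l u
      rw [hlast, if_pos rfl, if_neg huv] at hphi
      have hz : (∑ x, augF f u l x u) = 0 := by
        refine Finset.sum_eq_zero fun x _ => ?_
        rw [heval x u, if_neg (show (x, u) ∉ A from not_mem_arcs_snd_head hnd)]
        by_cases h2 : (u, x) ∈ A
        · rw [if_pos h2]; have := hinu x; omega
        · rw [if_neg h2]
      unfold phi at hphi
      omega
    omega

/-- Extracting a path from a positive flow, with the decremented flow. -/
theorem extract (huv : u ≠ v) {f : V → V → ℤ} (hf : IsFlow G u v f)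
    (h : Relation.ReflTransGen (fun a b => G.Adj a b ∧ f a b ≠ 0) u v) :
    ∃ p : G.Walk u v, p.IsPath ∧ (∀ x y : V, s(x, y) ∈ p.edges → f x y + f y x = 1) ∧
      ∃ f', IsFlow G u v f' ∧ fval u f' = fval u f - 1 ∧
        (∀ x y, f' x y ≤ f x y) ∧
        (∀ x y : V, s(x, y) ∈ p.edges → f' x y = 0 ∧ f' y x = 0) := by
  obtain ⟨hpos, hadj, hcap, hinu, houtv, hcons⟩ := hf
  obtain ⟨l, hc, hlast, hnd⟩ := exists_nodup_chain h
  set A := arcs u l with hA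
  have harc : ∀ p q : V, (p, q) ∈ A → G.Adj p q ∧ f p q = 1 := by
    intro p q hpq
    have h1 := rel_of_mem_arcs (r := fun a b => G.Adj a b ∧ f a b ≠ 0) hc hpq
    have h2 := hcap p q
    have h3 := hpos p q
    have h4 := hpos q p
    have h5 := h1.2
    exact ⟨h1.1, by omega⟩
  have hrev : ∀ p q : V, (p, q) ∈ A → (q, p) ∉ A := fun p q hpq => not_rev_mem_arcs hnd hpq
  have heval := decF_eval hnd
  have hcG : List.Chain G.Adj u l := List.Chain.imp (fun a b hab => hab.1) hc
  have hedgemem : ∀ x y : V, s(x, y) ∈ ((walkOfChain G u l hcG).copy rfl hlast).edges →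
      (x, y) ∈ A ∨ (y, x) ∈ A := by
    intro x y hmem
    rw [SimpleGraph.Walk.edges_copy, walkOfChain_edges, List.mem_map] at hmem
    obtain ⟨⟨p, q⟩, hpq, hs⟩ := hmem
    rcases Sym2.eq_iff.mp hs with ⟨rfl, rfl⟩ | ⟨rfl, rfl⟩
    · exact Or.inl hpq
    · exact Or.inr hpq
  refine ⟨(walkOfChain G u l hcG).copy rfl hlast, ?_, ?_, ?_⟩
  · rw [SimpleGraph.Walk.isPath_copy]
    exact walkOfChain_isPath hcG hnd
  · intro x y hmem
    rcases hedgemem x y hmem with hm | hm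
    · have h1 := (harc x y hm).2
      have := hcap x y
      have := hpos y x
      omega
    · have h1 := (harc y x hm).2
      have := hcap y x
      have := hpos x y
      omega
  refine ⟨fun x y => f x y + decF u l x y, ⟨?_, ?_, ?_, ?_, ?_, ?_⟩, ?_, ?_, ?_⟩
  · intro a b
    dsimp only
    rw [heval a b]
    by_cases h1 : (a, b) ∈ A
    · rw [if_pos h1]; have := (harc a b h1).2; omega
    · rw [if_neg h1]; have := hpos a b; omega
  · intro a b hne
    dsimp only at hne
    rw [heval a b] at hne
    by_cases h1 : (a, b) ∈ A
    · exact (harc a b h1).1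
    · rw [if_neg h1] at hne
      exact hadj a b (by omega)
  · intro a b
    dsimp only
    rw [heval a b, heval b a]
    have := hcap a b
    split_ifs <;> omega
  · intro x
    dsimp only
    rw [heval x u, if_neg (show (x, u) ∉ A from not_mem_arcs_snd_head hnd)]
    have := hinu x
    omega
  · intro x
    have hvlast : (v, x) ∉ A := by
      rw [← hlast]
      exact not_mem_arcs_fst_last hnd
    dsimp only
    rw [heval v x, if_neg hvlast]
    have := houtv x
    omega
  · intro w hwu hwv
    rw [phi_add, hcons w hwu hwv, phi_decF, hlast, if_neg hwv, if_neg hwu]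
    ring
  · -- value
    unfold fval
    dsimp only
    rw [Finset.sum_add_distrib]
    have : (∑ x, decF u l u x) = -1 := by
      have hphi := phi_decF u l u
      rw [hlast, if_neg (fun hh : u = v => huv hh), if_pos rfl] at hphi
      have hz : (∑ x, decF u l x u) = 0 := by
        refine Finset.sum_eq_zero fun x _ => ?_
        rw [heval x u, if_neg (show (x, u) ∉ A from not_mem_arcs_snd_head hnd)]
      unfold phi at hphi
      omega
    omega
  · intro x y
    dsimp only
    rw [heval x y]
    split_ifs <;> omega
  · intro x y hmem
    have key : ∀ p q : V, (p, q) ∈ A → f p q + decF u l p q = 0 ∧ f q p + decF u l q p = 0 := by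
      intro p q hpq
      have h1 := (harc p q hpq).2
      have h2 := hcap p q
      have h3 := hpos q p
      rw [heval p q, if_pos hpq, heval q p, if_neg (hrev p q hpq)]
      omega
    rcases hedgemem x y hmem with hm | hm
    · exact key x y hm
    · exact ⟨(key y x hm).2, (key y x hm).1⟩


theorem exists_max_flow :
    ∃ f, IsFlow G u v f ∧ ∀ f', IsFlow G u v f' → fval u f' ≤ fval u f := by
  classical
  set N : Set ℕ := {n | ∃ f, IsFlow G u v f ∧ fval u f = n} with hN
  have h0 : 0 ∈ N := by
    refine ⟨fun _ _ => 0, ⟨fun a b => le_refl 0, fun a b hn => absurd rfl hn,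
      fun a b => by norm_num, fun x => rfl, fun x => rfl, fun w _ _ => by simp [phi]⟩,
      by simp [fval]⟩
  have hbdd : ∀ n ∈ N, n ≤ Fintype.card V := by
    rintro n ⟨f, hf, hv⟩
    have hle : fval u f ≤ Fintype.card V := by
      unfold fval
      calc (∑ x, f u x) ≤ ∑ _x : V, 1 := by
            refine Finset.sum_le_sum fun x _ => ?_
            have := hf.2.2.1 u x
            have := hf.1 x u
            omega
        _ = Fintype.card V := by simp
    omega
  have hne : N.Nonempty := ⟨0, h0⟩
  have hb : BddAbove N := ⟨Fintype.card V, fun n hn => hbdd n hn⟩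
  obtain ⟨f, hf, hv⟩ := Nat.sSup_mem hne hb
  refine ⟨f, hf, fun f' hf' => ?_⟩
  have h1 : (fval u f').toNat ∈ N := ⟨f', hf', (Int.toNat_of_nonneg (fval_nonneg hf')).symm⟩
  have h2 := le_csSup hb h1
  have h3 := fval_nonneg hf'
  omega

theorem reach_of_pos {f : V → V → ℤ} (hf : IsFlow G u v f) (hpos : 0 < fval u f) :
    Relation.ReflTransGen (fun a b => G.Adj a b ∧ f a b ≠ 0) u v := by
  by_contra hcon
  classical
  set S : Finset V :=
    Finset.univ.filter (fun w => Relation.ReflTransGen (fun a b => G.Adj a b ∧ f a b ≠ 0) u w)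
    with hS
  have hu : u ∈ S := Finset.mem_filter.mpr ⟨Finset.mem_univ _, Relation.ReflTransGen.refl⟩
  have hv : v ∉ S := fun h => hcon ((Finset.mem_filter.mp h).2)
  have hcross := cross_sum hf S hu hv
  have hzero : ∑ w ∈ S, ∑ x ∈ Sᶜ, f w x = 0 := by
    refine Finset.sum_eq_zero fun w hw => Finset.sum_eq_zero fun x hx => ?_
    by_contra hne
    have hadj := hf.2.1 w x hne
    have hreach : Relation.ReflTransGen (fun a b => G.Adj a b ∧ f a b ≠ 0) u x :=
      (Finset.mem_filter.mp hw).2.tail ⟨hadj, hne⟩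
    exact (Finset.mem_compl.mp hx) (Finset.mem_filter.mpr ⟨Finset.mem_univ _, hreach⟩)
  have hnn : 0 ≤ ∑ w ∈ S, ∑ x ∈ Sᶜ, f x w :=
    Finset.sum_nonneg fun w _ => Finset.sum_nonneg fun x _ => hf.1 x w
  omega

theorem walk_closed {H : SimpleGraph V} {S : Finset V}
    (hstep : ∀ a b : V, a ∈ S → H.Adj a b → b ∈ S) :
    ∀ {a b : V} (q : H.Walk a b), a ∈ S → b ∈ S := by
  intro a b q
  induction q with
  | nil => exact id
  | cons h q ih => exact fun ha => ih (hstep _ _ ha h)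

theorem cut_of_max (huv : u ≠ v) {f : V → V → ℤ} (hf : IsFlow G u v f)
    (hmax : ∀ f', IsFlow G u v f' → fval u f' ≤ fval u f) :
    ∃ F : Finset (Sym2 V), ↑F ⊆ G.edgeSet ∧ ¬ (G.deleteEdges ↑F).Reachable u v ∧
      (F.card : ℤ) = fval u f := by
  classical
  have hnoaug : ¬ Relation.ReflTransGen (fun a b => G.Adj a b ∧ f a b = 0) u v := by
    intro h
    obtain ⟨f', hf', hv⟩ := augment huv hf h
    have := hmax f' hf'
    omega
  set S : Finset V :=
    Finset.univ.filter (fun w => Relation.ReflTransGen (fun a b => G.Adj a b ∧ f a b = 0) u w)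
    with hS
  have hu : u ∈ S := Finset.mem_filter.mpr ⟨Finset.mem_univ _, Relation.ReflTransGen.refl⟩
  have hv : v ∉ S := fun h => hnoaug ((Finset.mem_filter.mp h).2)
  set P : Finset (V × V) := (S ×ˢ Sᶜ).filter (fun p => G.Adj p.1 p.2) with hP
  set F : Finset (Sym2 V) := P.image (fun p => s(p.1, p.2)) with hF
  have hcrossval : ∀ w x : V, w ∈ S → x ∉ S → G.Adj w x → f w x = 1 ∧ f x w = 0 := by
    intro w x hw hx hadj
    have hne : f w x ≠ 0 := by
      intro h0
      exact hx (Finset.mem_filter.mpr ⟨Finset.mem_univ _,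
        (Finset.mem_filter.mp hw).2.tail ⟨hadj, h0⟩⟩)
    have := hf.1 w x
    have := hf.1 x w
    have := hf.2.2.1 w x
    omega
  refine ⟨F, ?_, ?_, ?_⟩
  · intro e he
    rw [Finset.mem_coe, hF, Finset.mem_image] at he
    obtain ⟨p, hp, rfl⟩ := he
    exact (Finset.mem_filter.mp hp).2
  · intro hr
    have hstep : ∀ a b : V, a ∈ S → (G.deleteEdges ↑F).Adj a b → b ∈ S := by
      intro a b ha hab
      rw [SimpleGraph.deleteEdges_adj] at hab
      by_contra hb
      apply hab.2
      rw [hF, Finset.coe_image]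
      exact ⟨(a, b), Finset.mem_coe.mpr (Finset.mem_filter.mpr
        ⟨Finset.mem_product.mpr ⟨ha, Finset.mem_compl.mpr hb⟩, hab.1⟩), rfl⟩
    obtain ⟨p⟩ := hr
    exact hv (walk_closed hstep p hu)
  · have hinj : Set.InjOn (fun p : V × V => s(p.1, p.2)) ↑P := by
      intro p hp q hq heq
      have hp' := Finset.mem_product.mp (Finset.mem_filter.mp (Finset.mem_coe.mp hp)).1
      have hq' := Finset.mem_product.mp (Finset.mem_filter.mp (Finset.mem_coe.mp hq)).1
      rcases Sym2.eq_iff.mp heq with ⟨h1, h2⟩ | ⟨h1, h2⟩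
      · exact Prod.ext h1 h2
      · exfalso
        exact Finset.mem_compl.mp hq'.2 (h1 ▸ hp'.1)
    have hcard : F.card = P.card := Finset.card_image_of_injOn hinj
    have hcross := cross_sum hf S hu hv
    have hin : ∑ w ∈ S, ∑ x ∈ Sᶜ, f x w = 0 := by
      refine Finset.sum_eq_zero fun w hw => Finset.sum_eq_zero fun x hx => ?_
      by_contra hne
      have hadj := (hf.2.1 x w hne).symm
      exact hne (hcrossval w x hw (Finset.mem_compl.mp hx) hadj).2
    have hout : ∑ w ∈ S, ∑ x ∈ Sᶜ, f w x = P.card := by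
      rw [← Finset.sum_product']
      rw [← Finset.sum_filter_add_sum_filter_not (S ×ˢ Sᶜ) (fun p => G.Adj p.1 p.2)
        (fun p => f p.1 p.2)]
      have e2 : (∑ p ∈ (S ×ˢ Sᶜ).filter (fun p => ¬ G.Adj p.1 p.2), f p.1 p.2) = 0 := by
        refine Finset.sum_eq_zero fun p hp => ?_
        by_contra hne
        exact (Finset.mem_filter.mp hp).2 (hf.2.1 p.1 p.2 hne)
      have e1 : (∑ p ∈ P, f p.1 p.2) = P.card := by
        have hone : ∀ p ∈ P, f p.1 p.2 = 1 := by
          intro p hp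
          have hp1 := Finset.mem_filter.mp hp
          have hp2 := Finset.mem_product.mp hp1.1
          exact (hcrossval p.1 p.2 hp2.1 (Finset.mem_compl.mp hp2.2) hp1.2).1
        rw [Finset.sum_congr rfl hone, Finset.sum_const, nsmul_eq_mul, mul_one]
      simp only [hP] at e1 e2 ⊢
      rw [e1, e2]
      ring
    rw [hcard]
    omega

theorem decompose (huv : u ≠ v) : ∀ (n : ℕ) (f : V → V → ℤ), IsFlow G u v f →
    fval u f = n →
    ∃ P : Fin n → G.Path u v,
      (∀ i j, i ≠ j → ∀ e ∈ (P i).1.edges, e ∉ (P j).1.edges) ∧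
      (∀ i (x y : V), s(x, y) ∈ (P i).1.edges → 1 ≤ f x y + f y x) := by
  intro n
  induction n with
  | zero => exact fun f hf _ => ⟨Fin.elim0, fun i => i.elim0, fun i => i.elim0⟩
  | succ n ih =>
    intro f hf hval
    have hpos : 0 < fval u f := by omega
    obtain ⟨p, hp, hpe, f', hf', hval', hle, hzero⟩ := extract huv hf (reach_of_pos hf hpos)
    obtain ⟨P', hdisj', hpos'⟩ := ih f' hf' (by omega)
    have key : ∀ (j : Fin n) (e : Sym2 V), e ∈ p.edges → e ∈ (P' j).1.edges → False := by
      intro j e hep hej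
      induction e with
      | _ x y =>
        have h1 := hzero x y hep
        have h2 := hpos' j x y hej
        omega
    refine ⟨Fin.cons ⟨p, hp⟩ P', ?_, ?_⟩
    · intro i j hij e hei hej
      rcases Fin.eq_zero_or_eq_succ i with rfl | ⟨i', rfl⟩ <;>
        rcases Fin.eq_zero_or_eq_succ j with rfl | ⟨j', rfl⟩
      · exact hij rfl
      · rw [Fin.cons_zero] at hei
        rw [Fin.cons_succ] at hej
        exact key j' e hei hej
      · rw [Fin.cons_succ] at hei
        rw [Fin.cons_zero] at hej
        exact key i' e hej hei
      · rw [Fin.cons_succ] at hei hej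
        exact hdisj' i' j' (fun h => hij (congrArg Fin.succ h)) e hei hej
    · intro i x y hmem
      rcases Fin.eq_zero_or_eq_succ i with rfl | ⟨i', rfl⟩
      · rw [Fin.cons_zero] at hmem
        have := hpe x y hmem
        omega
      · rw [Fin.cons_succ] at hmem
        have h1 := hpos' i' x y hmem
        have h2 := hle x y
        have h3 := hle y x
        omega

theorem paths_le_cut {n : ℕ} (P : Fin n → G.Path u v)
    (hdisj : ∀ i j, i ≠ j → ∀ e ∈ (P i).1.edges, e ∉ (P j).1.edges)
    (F : Finset (Sym2 V)) (hcut : ¬ (G.deleteEdges ↑F).Reachable u v) : n ≤ F.card := by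
  classical
  have hex : ∀ i : Fin n, ∃ e, e ∈ (P i).1.edges ∧ e ∈ F := by
    intro i
    by_contra hcon
    push_neg at hcon
    apply hcut
    refine ⟨(P i).1.transfer (G.deleteEdges ↑F) ?_⟩
    intro e he
    rw [SimpleGraph.edgeSet_deleteEdges]
    exact ⟨(P i).1.edges_subset_edgeSet he, hcon e he⟩
  choose g hg1 hg2 using hex
  have hinj : Function.Injective g := by
    intro i j hij
    by_contra hne
    exact hdisj i j hne (g i) (hg1 i) (hij ▸ hg1 j)
  have : Fintype.card (Fin n) ≤ Fintype.card { x // x ∈ F } := by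
    refine Fintype.card_le_of_injective (fun i => ⟨g i, hg2 i⟩) ?_
    intro i j hij
    exact hinj (congrArg Subtype.val hij)
  rwa [Fintype.card_fin, Fintype.card_coe] at this

end Graph
end MengerAux


theorem stmt18 {V : Type*} [Fintype V] (G : SimpleGraph V) (u v : V) (huv : u ≠ v) :
    lam G u v = sSup {n | ∃ P : Fin n → G.Path u v,
      ∀ i j, i ≠ j → ∀ e ∈ (P i).1.edges, e ∉ (P j).1.edges} := by
  classical
  set Sp := {n | ∃ P : Fin n → G.Path u v,
      ∀ i j, i ≠ j → ∀ e ∈ (P i).1.edges, e ∉ (P j).1.edges} with hSp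
  -- the set of cut cardinalities is nonempty
  have hlamne : {n | ∃ F : Finset (Sym2 V), CutsBetween G u v F ∧ F.card = n}.Nonempty := by
    refine ⟨(G.edgeSet.toFinite.toFinset).card, G.edgeSet.toFinite.toFinset, ⟨?_, ?_⟩, rfl⟩
    · rw [Set.Finite.coe_toFinset]
    · rw [Set.Finite.coe_toFinset]
      intro hr
      obtain ⟨p⟩ := hr
      cases p with
      | nil => exact huv rfl
      | cons h _ =>
        rw [SimpleGraph.deleteEdges_adj] at h
        exact h.2 ((SimpleGraph.mem_edgeSet G).mpr h.1)
  obtain ⟨Fm, hFm, hFmcard⟩ := Nat.sInf_mem hlamne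
  have hub : ∀ n ∈ Sp, n ≤ lam G u v := by
    rintro n ⟨P, hdisj⟩
    have h1 := MengerAux.paths_le_cut P hdisj Fm hFm.2
    have h2 : Fm.card = lam G u v := hFmcard
    omega
  obtain ⟨f, hf, hmax⟩ := MengerAux.exists_max_flow (G := G) (u := u) (v := v)
  obtain ⟨F, hFsub, hFreach, hFcard⟩ := MengerAux.cut_of_max huv hf hmax
  have hlamleF : lam G u v ≤ F.card := Nat.sInf_le ⟨F, ⟨hFsub, hFreach⟩, rfl⟩
  have hnn := MengerAux.fval_nonneg hf
  obtain ⟨P, hdisj, -⟩ := MengerAux.decompose huv (MengerAux.fval u f).toNat f hf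
    (Int.toNat_of_nonneg hnn).symm
  have hmemS : (MengerAux.fval u f).toNat ∈ Sp := ⟨P, hdisj⟩
  have h2 : (MengerAux.fval u f).toNat ≤ lam G u v := hub _ hmemS
  have heq : lam G u v = (MengerAux.fval u f).toNat := by omega
  have hlamS : lam G u v ∈ Sp := heq ▸ hmemS
  refine le_antisymm ?_ ?_
  · exact le_csSup ⟨lam G u v, hub⟩ hlamS
  · exact csSup_le ⟨0, ⟨Fin.elim0, fun i => i.elim0⟩⟩ hub
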